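/- arXiv:1811.07085 — 4 statements merged into one kernel-verified Lean document; each statement's English description precedes it below -/
import Mathlib

section
/- Let Γ be a discrete group, K a finite subset of Γ, and c > 0. If K is a groupoid-Kazhdan set with constant c, then (K, c) is a Kazhdan pair for Γ, i.e. K is a Kazhdan set for Γ in the classical group sense with the same constant c. (This is one direction of the proposition that a finite subset of a discrete group is a group Kazhdan set if and only if it is a groupoid Kazhdan set.) -/
open scoped InnerProductSpace

noncomputable section

/-- A classical Kazhdan pair for a discrete group `Γ`: every unitary representation
admitting a `(Q, c)`-almost-invariant unit vector has a nonzero invariant vector. -/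
def IsKazhdanPair (Γ : Type) [Group Γ] (Q : Set Γ) (c : ℝ) : Prop :=
  ∀ (H : Type) [NormedAddCommGroup H] [InnerProductSpace ℂ H] [CompleteSpace H]
    (u : Γ →* unitary (H →L[ℂ] H)),
    (∃ ξ : H, ‖ξ‖ = 1 ∧ ∀ g ∈ Q, ‖(u g : H →L[ℂ] H) ξ - ξ‖ < c) →
    ∃ η : H, η ≠ 0 ∧ ∀ g : Γ, (u g : H →L[ℂ] H) η = η

/-- A groupoid-Kazhdan set with constant `c`: for every unitary representation and every
vector `ξ` orthogonal to the invariant vectors there is a finitely supported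
`f : Γ → ℂ` supported in `K` with `ℓ¹`-norm at most one such that
`‖Σ_g f(g) u_g ξ − (Σ_g f(g)) ξ‖ ≥ c ‖ξ‖`. -/
def IsGroupoidKazhdanSet (Γ : Type) [Group Γ] (K : Set Γ) (c : ℝ) : Prop :=
  ∀ (H : Type) [NormedAddCommGroup H] [InnerProductSpace ℂ H] [CompleteSpace H]
    (u : Γ →* unitary (H →L[ℂ] H)) (ξ : H),
    (∀ η : H, (∀ g : Γ, (u g : H →L[ℂ] H) η = η) → (inner ℂ η ξ : ℂ) = 0) →
    ∃ f : Γ →₀ ℂ,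
      (f.support : Set Γ) ⊆ K ∧ (∑ g ∈ f.support, ‖f g‖) ≤ 1 ∧
      c * ‖ξ‖ ≤ ‖(∑ g ∈ f.support, f g • ((u g : H →L[ℂ] H) ξ)) - (∑ g ∈ f.support, f g) • ξ‖

/-- If a finite subset `K` of a discrete group `Γ` is a groupoid-Kazhdan set with constant
`c > 0`, then `(K, c)` is a Kazhdan pair for `Γ` in the classical group sense. -/
theorem groupoidKazhdanSet_isKazhdanPair (Γ : Type) [Group Γ] (K : Set Γ) (hK : K.Finite)
    (c : ℝ) (hc : 0 < c) (h : IsGroupoidKazhdanSet Γ K c) :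
    IsKazhdanPair Γ K c := by
  intro H _ _ _ u ⟨ξ, hξ, happrox⟩
  by_contra hno
  push_neg at hno
  obtain ⟨f, hsupp, hl1, hnorm⟩ := h H u ξ (fun η hη => by
    have : η = 0 := by
      by_contra h0
      obtain ⟨g, hg⟩ := hno η h0
      exact hg (hη g)
    simp [this])
  rw [hξ, mul_one] at hnorm
  have key : ‖(∑ g ∈ f.support, f g • ((u g : H →L[ℂ] H) ξ)) -
      (∑ g ∈ f.support, f g) • ξ‖ < c := by
    have heq : (∑ g ∈ f.support, f g • ((u g : H →L[ℂ] H) ξ)) -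
        (∑ g ∈ f.support, f g) • ξ
        = ∑ g ∈ f.support, f g • ((u g : H →L[ℂ] H) ξ - ξ) := by
      rw [Finset.sum_smul, ← Finset.sum_sub_distrib]
      simp [smul_sub]
    rw [heq]
    rcases Finset.eq_empty_or_nonempty f.support with he | hne
    · simp [he, hc]
    · calc ‖∑ g ∈ f.support, f g • ((u g : H →L[ℂ] H) ξ - ξ)‖
          ≤ ∑ g ∈ f.support, ‖f g • ((u g : H →L[ℂ] H) ξ - ξ)‖ :=
            norm_sum_le _ _
        _ = ∑ g ∈ f.support, ‖f g‖ * ‖(u g : H →L[ℂ] H) ξ - ξ‖ := by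
            simp [norm_smul]
        _ < ∑ g ∈ f.support, ‖f g‖ * c := by
            refine Finset.sum_lt_sum_of_nonempty hne fun g hg => ?_
            have hfg : (0:ℝ) < ‖f g‖ :=
              norm_pos_iff.2 (Finsupp.mem_support_iff.1 hg)
            exact (mul_lt_mul_iff_right₀ hfg).2 (happrox g (hsupp hg))
        _ = (∑ g ∈ f.support, ‖f g‖) * c := by rw [Finset.sum_mul]
        _ ≤ 1 * c := by
            exact mul_le_mul_of_nonneg_right hl1 hc.le
        _ = c := one_mul c
  exact absurd hnorm (not_le.2 key)

end
end

section
/- Let Γ be a discrete group, S a finite subset of Γ, and c > 0. If (S, c) is a Kazhdan pair for Γ in the classical group sense, then S is a groupoid-Kazhdan set with the same constant c. (This is the other direction of the proposition that a finite subset of a discrete group is a group Kazhdan set if and only if it is a groupoid Kazhdan set.) -/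
open scoped InnerProductSpace

noncomputable section

section Aux

variable {Γ : Type} [Group Γ] {H : Type} [NormedAddCommGroup H] [InnerProductSpace ℂ H]
  [CompleteSpace H] (u : Γ →* unitary (H →L[ℂ] H))

/-- The submodule of invariant vectors. -/
def invSub : Submodule ℂ H where
  carrier := {η | ∀ g : Γ, (u g : H →L[ℂ] H) η = η}
  add_mem' ha hb g := by rw [map_add, ha g, hb g]
  zero_mem' g := map_zero _
  smul_mem' c x hx g := by rw [map_smul, hx g]

lemma u_mul_apply (g g' : Γ) (x : H) :
    (u (g * g') : H →L[ℂ] H) x = (u g : H →L[ℂ] H) ((u g' : H →L[ℂ] H) x) := by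
  rw [map_mul]; rfl

lemma u_inv_apply (g : Γ) (x : H) :
    (u g⁻¹ : H →L[ℂ] H) ((u g : H →L[ℂ] H) x) = x := by
  rw [← u_mul_apply, inv_mul_cancel, map_one]; rfl

lemma mem_orth_invariant (g : Γ) {x : H} (hx : x ∈ (invSub u)ᗮ) :
    (u g : H →L[ℂ] H) x ∈ (invSub u)ᗮ := by
  rw [Submodule.mem_orthogonal]
  intro v hv
  calc (inner ℂ v ((u g : H →L[ℂ] H) x) : ℂ)
      = inner ℂ ((u g : H →L[ℂ] H) v) ((u g : H →L[ℂ] H) x) := by rw [hv g]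
    _ = inner ℂ v x := Unitary.inner_map_map (u g) v x
    _ = 0 := (Submodule.mem_orthogonal _ _).1 hx v hv

/-- Restriction of the representation to the orthogonal complement of invariants. -/
def resEquiv (g : Γ) : ((invSub u)ᗮ : Submodule ℂ H) ≃ₗᵢ[ℂ] ((invSub u)ᗮ : Submodule ℂ H) where
  toFun x := ⟨(u g : H →L[ℂ] H) x, mem_orth_invariant u g x.2⟩
  invFun x := ⟨(u g⁻¹ : H →L[ℂ] H) x, mem_orth_invariant u g⁻¹ x.2⟩
  map_add' x y := Subtype.ext (map_add _ _ _)
  map_smul' c x := Subtype.ext (map_smul _ _ _)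
  left_inv x := Subtype.ext (u_inv_apply u g x)
  right_inv x := Subtype.ext (by simpa using u_inv_apply u g⁻¹ (x : H))
  norm_map' x := Unitary.norm_map (u g) x

lemma resEquiv_apply (g : Γ) (x : ((invSub u)ᗮ : Submodule ℂ H)) :
    ((resEquiv u g x : ((invSub u)ᗮ : Submodule ℂ H)) : H) = (u g : H →L[ℂ] H) x := rfl

/-- The restricted representation as a monoid hom into unitaries. -/
def resRep : Γ →* unitary ((((invSub u)ᗮ : Submodule ℂ H)) →L[ℂ] (((invSub u)ᗮ : Submodule ℂ H))) :=
  MonoidHom.comp (Unitary.linearIsometryEquiv.symm.toMonoidHom)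
    { toFun := resEquiv u
      map_one' := LinearIsometryEquiv.ext fun x => Subtype.ext (by
        rw [resEquiv_apply, map_one]; rfl)
      map_mul' := fun g g' => LinearIsometryEquiv.ext fun x => Subtype.ext (by
        rw [resEquiv_apply, u_mul_apply]; rfl) }

lemma resRep_apply (g : Γ) (x : ((invSub u)ᗮ : Submodule ℂ H)) :
    ((((resRep u g : unitary _) :
        ((invSub u)ᗮ : Submodule ℂ H) →L[ℂ] ((invSub u)ᗮ : Submodule ℂ H)) x : _) : H)
      = (u g : H →L[ℂ] H) x := rfl

end Aux

/-- If `(S, c)` is a Kazhdan pair for a discrete group `Γ` in the classical group sense,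
with `S` finite, then `S` is a groupoid-Kazhdan set with the same constant `c`. -/
theorem kazhdanPair_isGroupoidKazhdanSet (Γ : Type) [Group Γ] (S : Set Γ) (hS : S.Finite)
    (c : ℝ) (hc : 0 < c) (h : IsKazhdanPair Γ S c) :
    IsGroupoidKazhdanSet Γ S c := by
  intro H _ _ _ u ξ hξ
  by_cases hξ0 : ξ = 0
  · refine ⟨0, by simp, by simp, by simp [hξ0]⟩
  · have hξW : ξ ∈ (invSub u)ᗮ := by
      rw [Submodule.mem_orthogonal]
      intro v hv
      exact hξ v hv
    have key : ∃ g ∈ S, c * ‖ξ‖ ≤ ‖(u g : H →L[ℂ] H) ξ - ξ‖ := by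
      by_contra hcon
      push_neg at hcon
      have hnorm : (0 : ℝ) < ‖ξ‖ := norm_pos_iff.2 hξ0
      set W : Submodule ℂ H := (invSub u)ᗮ with hW
      set ξ' : W := ⟨(‖ξ‖⁻¹ : ℂ) • ξ, W.smul_mem _ hξW⟩ with hξ'def
      have hξ'norm : ‖ξ'‖ = 1 := by
        have h1 : ‖(ξ' : H)‖ = ‖(‖ξ‖⁻¹ : ℂ)‖ * ‖ξ‖ := norm_smul _ _
        rw [show ‖ξ'‖ = ‖(ξ' : H)‖ from rfl, h1]
        simp [abs_of_pos hnorm, inv_mul_cancel₀ hnorm.ne']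
      have halmost : ∀ g ∈ S,
          ‖((resRep u g : unitary _) : W →L[ℂ] W) ξ' - ξ'‖ < c := by
        intro g hg
        have hval : ((((resRep u g : unitary _) : W →L[ℂ] W) ξ' - ξ' : W) : H)
            = (‖ξ‖⁻¹ : ℂ) • ((u g : H →L[ℂ] H) ξ - ξ) := by
          show (u g : H →L[ℂ] H) ((‖ξ‖⁻¹ : ℂ) • ξ) - (‖ξ‖⁻¹ : ℂ) • ξ = _
          rw [map_smul, smul_sub]
        have heq : ‖((resRep u g : unitary _) : W →L[ℂ] W) ξ' - ξ'‖
            = ‖ξ‖⁻¹ * ‖(u g : H →L[ℂ] H) ξ - ξ‖ := by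
          calc ‖((resRep u g : unitary _) : W →L[ℂ] W) ξ' - ξ'‖
              = ‖((((resRep u g : unitary _) : W →L[ℂ] W) ξ' - ξ' : W) : H)‖ := rfl
            _ = ‖(‖ξ‖⁻¹ : ℂ) • ((u g : H →L[ℂ] H) ξ - ξ)‖ := by rw [hval]
            _ = ‖ξ‖⁻¹ * ‖(u g : H →L[ℂ] H) ξ - ξ‖ := by
                rw [norm_smul]
                simp [abs_of_pos hnorm]
        rw [heq]
        have := mul_lt_mul_of_pos_left (hcon g hg) (inv_pos.2 hnorm)
        calc ‖ξ‖⁻¹ * ‖(u g : H →L[ℂ] H) ξ - ξ‖ < ‖ξ‖⁻¹ * (c * ‖ξ‖) := this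
          _ = c := by field_simp
      obtain ⟨η, hη0, hηinv⟩ := h W (resRep u) ⟨ξ', hξ'norm, halmost⟩
      have hηinvH : ∀ g : Γ, (u g : H →L[ℂ] H) (η : H) = (η : H) := by
        intro g
        have := congrArg Subtype.val (hηinv g)
        exact this
      have hinner : (inner ℂ (η : H) (η : H) : ℂ) = 0 :=
        (Submodule.mem_orthogonal _ _).1 η.2 (η : H) hηinvH
      have : (η : H) = 0 := by rwa [inner_self_eq_zero] at hinner
      exact hη0 (Subtype.ext this)
    obtain ⟨g, hgS, hgξ⟩ := key
    refine ⟨Finsupp.single g 1, ?_, ?_, ?_⟩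
    · rw [Finsupp.support_single_ne_zero _ one_ne_zero]
      simpa using hgS
    · rw [Finsupp.support_single_ne_zero _ one_ne_zero]
      simp
    · rw [Finsupp.support_single_ne_zero _ one_ne_zero]
      simpa using hgξ


end
end

section
/- Let Γ be a discrete group acting by homeomorphisms on a compact Hausdorff space X. Then there exist a complex Hilbert space H, a covariant pair (π, u) on H, and a nonzero vector ξ ∈ H with u_g ξ = ξ for all g ∈ Γ, if and only if X admits a Γ-invariant Borel probability measure. (Specialisation to transformation groupoids of: a groupoid admits a representation with nonzero constant vectors if and only if its unit space admits an invariant probability measure; constant vectors for a covariant pair are exactly the u-fixed vectors.) -/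
open scoped InnerProductSpace Pointwise


noncomputable section

/-- A covariant pair for the action of a discrete group `Γ` on a compact Hausdorff space
`X`, on a complex Hilbert space `H`: a unital *-homomorphism `π : C(X, ℂ) → B(H)` and a
unitary representation `u` of `Γ` on `H` satisfying the covariance relation
`u_g π(f) u_g⁻¹ = π(x ↦ f(g⁻¹ · x))`. -/
structure CovariantPair (Γ : Type) [Group Γ] (X : Type) [TopologicalSpace X]
    [CompactSpace X] [T2Space X] [MulAction Γ X] [ContinuousConstSMul Γ X]
    (H : Type) [NormedAddCommGroup H] [InnerProductSpace ℂ H] [CompleteSpace H] where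
  π : C(X, ℂ) →⋆ₐ[ℂ] (H →L[ℂ] H)
  u : Γ →* unitary (H →L[ℂ] H)
  covariant : ∀ (g : Γ) (f : C(X, ℂ)),
    (u g : H →L[ℂ] H) * π f * (u g⁻¹ : H →L[ℂ] H) =
      π (f.comp ⟨fun x => g⁻¹ • x, continuous_const_smul g⁻¹⟩)

/-- Property (T) for the transformation groupoid `X ⋊ Γ`, phrased via covariant pairs:
there are a finite `S ⊆ Γ` and `c > 0` such that for every covariant pair `(π, u)` and
every vector `ξ` orthogonal to the `u`-invariant vectors there is a family
`(f_g)_{g ∈ S}` in `C(X, ℂ)` with I-norm at most one and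
`‖Σ_{g ∈ S} π(f_g) u_g ξ − π(Σ_{g ∈ S} f_g) ξ‖ ≥ c ‖ξ‖`. -/
def TransPropT (Γ : Type) [Group Γ] (X : Type) [TopologicalSpace X] [CompactSpace X]
    [T2Space X] [MulAction Γ X] [ContinuousConstSMul Γ X] : Prop :=
  ∃ (S : Finset Γ) (c : ℝ), 0 < c ∧
    ∀ (H : Type) [NormedAddCommGroup H] [InnerProductSpace ℂ H] [CompleteSpace H]
      (cp : CovariantPair Γ X H) (ξ : H),
      (∀ η : H, (∀ g : Γ, (cp.u g : H →L[ℂ] H) η = η) → (inner ℂ η ξ : ℂ) = 0) →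
      ∃ f : Γ → C(X, ℂ),
        (∀ x : X, ∑ g ∈ S, ‖f g x‖ ≤ 1) ∧
        (∀ x : X, ∑ g ∈ S, ‖f g (g • x)‖ ≤ 1) ∧
        c * ‖ξ‖ ≤ ‖(∑ g ∈ S, cp.π (f g) ((cp.u g : H →L[ℂ] H) ξ)) - cp.π (∑ g ∈ S, f g) ξ‖

/-- A `Γ`-invariant Borel probability measure on `X`. -/
def InvariantProbMeasure (Γ : Type) [Group Γ] (X : Type) [TopologicalSpace X]
    [MeasurableSpace X] [MulAction Γ X] (μ : MeasureTheory.Measure X) : Prop :=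
  MeasureTheory.IsProbabilityMeasure μ ∧ ∀ (g : Γ) (A : Set X), MeasurableSet A → μ (g • A) = μ A

/-- The data of a covariant pair for the action of `Γ` on `X` together with a nonzero
vector fixed by all the unitaries `u_g`. -/
structure CovariantPairWithFixedVector (Γ : Type) [Group Γ] (X : Type) [TopologicalSpace X]
    [CompactSpace X] [T2Space X] [MulAction Γ X] [ContinuousConstSMul Γ X] : Type 1 where
  H : Type
  [instNormed : NormedAddCommGroup H]
  [instInner : InnerProductSpace ℂ H]
  [instComplete : CompleteSpace H]
  cp : CovariantPair Γ X H
  ξ : H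
  ξ_ne_zero : ξ ≠ 0
  ξ_fixed : ∀ g : Γ, (cp.u g : H →L[ℂ] H) ξ = ξ


open MeasureTheory NNReal ENNReal TopologicalSpace
open scoped BoundedContinuousFunction

set_option linter.unusedSectionVars false
set_option maxHeartbeats 1000000

namespace CovPairAux

section forward
variable {Γ : Type} [Group Γ] {X : Type} [TopologicalSpace X]
    [CompactSpace X] [T2Space X] [MulAction Γ X] [ContinuousConstSMul Γ X]
    {H : Type} [NormedAddCommGroup H] [InnerProductSpace ℂ H] [CompleteSpace H]
    (cp : CovariantPair Γ X H) (ξ : H)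

/-- complexification of a real continuous function -/
def cplx (f : C(X, ℝ)) : C(X, ℂ) :=
  ⟨fun x => (f x : ℂ), Complex.continuous_ofReal.comp f.continuous⟩

def Tfun (f : C(X, ℝ)) : ℝ := RCLike.re (inner (𝕜 := ℂ) ξ (cp.π (cplx f) ξ))

lemma cplx_add (f g : C(X, ℝ)) : cplx (f + g) = cplx f + cplx g := by
  ext x; simp [cplx]

lemma Tfun_add (f g : C(X, ℝ)) : Tfun cp ξ (f + g) = Tfun cp ξ f + Tfun cp ξ g := by
  rw [Tfun, Tfun, Tfun, cplx_add, map_add, ContinuousLinearMap.add_apply, inner_add_right,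
    map_add]

lemma Tfun_smul (r : ℝ) (f : C(X, ℝ)) : Tfun cp ξ (r • f) = r * Tfun cp ξ f := by
  have h : cplx (r • f) = (r : ℂ) • cplx f := by ext x; simp [cplx]
  rw [Tfun, Tfun, h, _root_.map_smul, ContinuousLinearMap.smul_apply, inner_smul_right]
  simp

lemma Tfun_nonneg (f : C(X, ℝ)) (hf : ∀ x, 0 ≤ f x) : 0 ≤ Tfun cp ξ f := by
  set s : C(X, ℝ) := ⟨fun x => Real.sqrt (f x), Real.continuous_sqrt.comp f.continuous⟩ with hs
  have hG : cplx f = star (cplx s) * cplx s := by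
    ext x
    simp only [cplx, ContinuousMap.coe_mk, ContinuousMap.mul_apply, ContinuousMap.star_apply,
      hs, Complex.star_def, Complex.conj_ofReal, ← Complex.ofReal_mul]
    norm_cast
    exact (Real.mul_self_sqrt (hf x)).symm
  rw [Tfun, hG, map_mul, map_star, ContinuousLinearMap.star_eq_adjoint,
    ContinuousLinearMap.mul_apply, ContinuousLinearMap.adjoint_inner_right]
  exact inner_self_nonneg

lemma Tfun_one (hξ : ‖ξ‖ = 1) : Tfun cp ξ 1 = 1 := by
  have h1 : cplx (1 : C(X, ℝ)) = 1 := by ext x; simp [cplx]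
  rw [Tfun, h1, map_one, ContinuousLinearMap.one_apply, inner_self_eq_norm_sq, hξ]
  norm_num

lemma inner_u (γ : Γ) (a b : H) :
    (inner ℂ a ((cp.u γ : H →L[ℂ] H) b) : ℂ) = inner ℂ ((cp.u γ⁻¹ : H →L[ℂ] H) a) b := by
  rw [← ContinuousLinearMap.adjoint_inner_left]
  congr 1
  rw [← ContinuousLinearMap.star_eq_adjoint, ← Unitary.coe_star, Unitary.star_eq_inv,
    ← map_inv]

lemma Tfun_inv (hfix : ∀ γ : Γ, (cp.u γ : H →L[ℂ] H) ξ = ξ) (γ : Γ) (f : C(X, ℝ)) :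
    Tfun cp ξ (f.comp ⟨fun x => γ • x, continuous_const_smul γ⟩) = Tfun cp ξ f := by
  have hmap : (⟨fun x => γ • x, continuous_const_smul γ⟩ : C(X, X)) =
      ⟨fun x => (γ⁻¹)⁻¹ • x, continuous_const_smul (γ⁻¹)⁻¹⟩ := by
    ext x; rw [inv_inv]
  have hcomp : cplx (f.comp ⟨fun x => γ • x, continuous_const_smul γ⟩) =
      (cplx f).comp ⟨fun x => γ • x, continuous_const_smul γ⟩ := rfl
  rw [Tfun, Tfun, hcomp, hmap, ← cp.covariant γ⁻¹ (cplx f)]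
  rw [ContinuousLinearMap.mul_apply, ContinuousLinearMap.mul_apply]
  rw [show ((γ⁻¹)⁻¹ : Γ) = γ from inv_inv γ, hfix γ, inner_u cp γ⁻¹,
    show ((γ⁻¹)⁻¹ : Γ) = γ from inv_inv γ, hfix γ]

/-- underlying real continuous function of a bounded `ℝ≥0`-valued function -/
def toC (f : X →ᵇ ℝ≥0) : C(X, ℝ) :=
  ⟨fun x => (f x : ℝ), NNReal.continuous_coe.comp f.continuous⟩

def Lam : (X →ᵇ ℝ≥0) →ₗ[ℝ≥0] ℝ≥0 where
  toFun f := ⟨Tfun cp ξ (toC f), Tfun_nonneg cp ξ _ (fun x => (f x).2)⟩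
  map_add' f g := by
    have h : toC (f + g) = toC f + toC g := by ext x; simp [toC]
    ext
    show Tfun cp ξ (toC (f + g)) = Tfun cp ξ (toC f) + Tfun cp ξ (toC g)
    rw [h, Tfun_add]
  map_smul' r f := by
    have h : toC (r • f) = (r : ℝ) • toC f := by
      ext x; simp [toC, NNReal.smul_def]
    ext
    simp only [RingHom.id_apply, NNReal.coe_mk, NNReal.smul_def, NNReal.coe_mul]
    show Tfun cp ξ (toC (r • f)) = (r : ℝ) * Tfun cp ξ (toC f)
    rw [h, Tfun_smul]

lemma Lam_one (hξ : ‖ξ‖ = 1) : Lam cp ξ 1 = 1 := by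
  have h : toC (1 : X →ᵇ ℝ≥0) = 1 := by ext x; simp [toC]
  ext
  show Tfun cp ξ (toC 1) = 1
  rw [h, Tfun_one cp ξ hξ]

lemma Lam_mono (f g : X →ᵇ ℝ≥0) (h : ∀ x, f x ≤ g x) : Lam cp ξ f ≤ Lam cp ξ g := by
  set d : X →ᵇ ℝ≥0 := BoundedContinuousFunction.mkOfCompact
    ⟨fun x => g x - f x, by fun_prop⟩ with hd
  have hfd : f + d = g := by
    ext x
    simp only [BoundedContinuousFunction.add_apply, hd,
      BoundedContinuousFunction.mkOfCompact_apply, ContinuousMap.coe_mk]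
    rw [add_tsub_cancel_of_le (h x)]
  calc Lam cp ξ f ≤ Lam cp ξ f + Lam cp ξ d := le_self_add
    _ = Lam cp ξ (f + d) := (map_add _ _ _).symm
    _ = Lam cp ξ g := by rw [hfd]

lemma Lam_comp_inv (hfix : ∀ γ : Γ, (cp.u γ : H →L[ℂ] H) ξ = ξ) (γ : Γ) (f : X →ᵇ ℝ≥0) :
    Lam cp ξ (f.compContinuous ⟨fun x => γ • x, continuous_const_smul γ⟩) = Lam cp ξ f := by
  ext
  show Tfun cp ξ (toC _) = Tfun cp ξ (toC f)
  have h : toC (f.compContinuous ⟨fun x => γ • x, continuous_const_smul γ⟩) =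
      (toC f).comp ⟨fun x => γ • x, continuous_const_smul γ⟩ := rfl
  rw [h, Tfun_inv cp ξ hfix γ]

end forward

section content
variable {Γ : Type} [Group Γ] {X : Type} [TopologicalSpace X]
    [CompactSpace X] [T2Space X] [MulAction Γ X] [ContinuousConstSMul Γ X]

def rieszContentAux (Λ : (X →ᵇ ℝ≥0) →ₗ[ℝ≥0] ℝ≥0) : Compacts X → ℝ≥0 := fun K =>
  sInf (Λ '' { f : X →ᵇ ℝ≥0 | ∀ x ∈ K, (1 : ℝ≥0) ≤ f x })

lemma rieszContentAux_image_nonempty (Λ : (X →ᵇ ℝ≥0) →ₗ[ℝ≥0] ℝ≥0) (K : Compacts X) :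
    (Λ '' { f : X →ᵇ ℝ≥0 | ∀ x ∈ K, (1 : ℝ≥0) ≤ f x }).Nonempty :=
  ⟨Λ 1, 1, fun _ _ => le_rfl, rfl⟩

lemma rieszContentAux_mono (Λ : (X →ᵇ ℝ≥0) →ₗ[ℝ≥0] ℝ≥0) {K₁ K₂ : Compacts X} (h : K₁ ≤ K₂) :
    rieszContentAux Λ K₁ ≤ rieszContentAux Λ K₂ :=
  csInf_le_csInf (OrderBot.bddBelow _) (rieszContentAux_image_nonempty Λ K₂)
    (Set.image_mono (Set.setOf_subset_setOf.mpr fun _ f_hyp x x_in_K₁ => f_hyp x (h x_in_K₁)))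

lemma rieszContentAux_le (Λ : (X →ᵇ ℝ≥0) →ₗ[ℝ≥0] ℝ≥0) {K : Compacts X} {f : X →ᵇ ℝ≥0}
    (h : ∀ x ∈ K, (1 : ℝ≥0) ≤ f x) : rieszContentAux Λ K ≤ Λ f :=
  csInf_le (OrderBot.bddBelow _) ⟨f, ⟨h, rfl⟩⟩

lemma exists_lt_rieszContentAux_add_pos (Λ : (X →ᵇ ℝ≥0) →ₗ[ℝ≥0] ℝ≥0) (K : Compacts X)
    {ε : ℝ≥0} (εpos : 0 < ε) :
    ∃ f : X →ᵇ ℝ≥0, (∀ x ∈ K, (1 : ℝ≥0) ≤ f x) ∧ Λ f < rieszContentAux Λ K + ε := by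
  obtain ⟨α, ⟨⟨f, f_hyp⟩, α_hyp⟩⟩ :=
    exists_lt_of_csInf_lt (rieszContentAux_image_nonempty Λ K)
      (lt_add_of_pos_right (rieszContentAux Λ K) εpos)
  refine ⟨f, f_hyp.left, ?_⟩
  rw [f_hyp.right]
  exact α_hyp

lemma rieszContentAux_sup_le (Λ : (X →ᵇ ℝ≥0) →ₗ[ℝ≥0] ℝ≥0) (K1 K2 : Compacts X) :
    rieszContentAux Λ (K1 ⊔ K2) ≤ rieszContentAux Λ K1 + rieszContentAux Λ K2 := by
  apply _root_.le_of_forall_pos_le_add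
  intro ε εpos
  obtain ⟨f1, f_test_function_K1⟩ := exists_lt_rieszContentAux_add_pos Λ K1 (half_pos εpos)
  obtain ⟨f2, f_test_function_K2⟩ := exists_lt_rieszContentAux_add_pos Λ K2 (half_pos εpos)
  have f_test_function_union : ∀ x ∈ K1 ⊔ K2, (1 : ℝ≥0) ≤ (f1 + f2 : X →ᵇ ℝ≥0) x := by
    rintro x (x_in_K1 | x_in_K2)
    · exact le_add_right (f_test_function_K1.left x x_in_K1)
    · exact le_add_left (f_test_function_K2.left x x_in_K2)
  apply (rieszContentAux_le Λ f_test_function_union).trans (le_of_lt _)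
  rw [map_add]
  have := add_lt_add f_test_function_K1.right f_test_function_K2.right
  rw [add_add_add_comm, add_halves] at this
  exact this

/-- any `ℝ≥0`-linear functional on `X →ᵇ ℝ≥0` is monotone -/
lemma lin_mono (Λ : (X →ᵇ ℝ≥0) →ₗ[ℝ≥0] ℝ≥0) (f g : X →ᵇ ℝ≥0) (h : ∀ x, f x ≤ g x) :
    Λ f ≤ Λ g := by
  set d : X →ᵇ ℝ≥0 := BoundedContinuousFunction.mkOfCompact
    ⟨fun x => g x - f x, by fun_prop⟩ with hd
  have hfd : f + d = g := by
    ext x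
    simp only [BoundedContinuousFunction.add_apply, hd,
      BoundedContinuousFunction.mkOfCompact_apply, ContinuousMap.coe_mk]
    rw [add_tsub_cancel_of_le (h x)]
  calc Λ f ≤ Λ f + Λ d := le_self_add
    _ = Λ (f + d) := (map_add _ _ _).symm
    _ = Λ g := by rw [hfd]

def rContent (Λ : (X →ᵇ ℝ≥0) →ₗ[ℝ≥0] ℝ≥0) : MeasureTheory.Content X where
  toFun := rieszContentAux Λ
  mono' _ _ h := rieszContentAux_mono Λ h
  sup_le' := rieszContentAux_sup_le Λ
  sup_disjoint' K₁ K₂ hd h₁ h₂ := by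
    refine le_antisymm (rieszContentAux_sup_le Λ K₁ K₂) ?_
    refine le_csInf (rieszContentAux_image_nonempty Λ (K₁ ⊔ K₂)) ?_
    rintro b ⟨f, hf, rfl⟩
    obtain ⟨w, hw2, hw1, hw01⟩ := exists_continuous_zero_one_of_isClosed h₂ h₁ hd.symm
    have hwle : ∀ x, Real.toNNReal (w x) ≤ 1 := by
      intro x
      rw [show (1 : ℝ≥0) = Real.toNNReal 1 by simp]
      exact Real.toNNReal_mono (hw01 x).2
    set p1 : X →ᵇ ℝ≥0 := BoundedContinuousFunction.mkOfCompact
      ⟨fun x => f x * Real.toNNReal (w x),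
        f.continuous.mul (continuous_real_toNNReal.comp w.continuous)⟩ with hp1
    set p2 : X →ᵇ ℝ≥0 := BoundedContinuousFunction.mkOfCompact
      ⟨fun x => f x * (1 - Real.toNNReal (w x)),
        f.continuous.mul (Continuous.sub continuous_const
          (continuous_real_toNNReal.comp w.continuous))⟩ with hp2
    have key : p1 + p2 = f := by
      ext x
      simp only [BoundedContinuousFunction.add_apply, hp1, hp2,
        BoundedContinuousFunction.mkOfCompact_apply, ContinuousMap.coe_mk]
      rw [← mul_add, add_tsub_cancel_of_le (hwle x), mul_one]
    have hb1 : ∀ x ∈ K₁, (1 : ℝ≥0) ≤ p1 x := by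
      intro x hx
      have hfx : (1 : ℝ≥0) ≤ f x := hf x (Set.mem_union_left _ hx)
      have hwx : w x = 1 := hw1 hx
      simp only [hp1, BoundedContinuousFunction.mkOfCompact_apply, ContinuousMap.coe_mk, hwx]
      simpa using hfx
    have hb2 : ∀ x ∈ K₂, (1 : ℝ≥0) ≤ p2 x := by
      intro x hx
      have hfx : (1 : ℝ≥0) ≤ f x := hf x (Set.mem_union_right _ hx)
      have hwx : w x = 0 := hw2 hx
      simp only [hp2, BoundedContinuousFunction.mkOfCompact_apply, ContinuousMap.coe_mk, hwx]
      simpa using hfx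
    calc rieszContentAux Λ K₁ + rieszContentAux Λ K₂ ≤ Λ p1 + Λ p2 :=
          add_le_add (rieszContentAux_le Λ hb1) (rieszContentAux_le Λ hb2)
      _ = Λ (p1 + p2) := (map_add _ _ _).symm
      _ = Λ f := by rw [key]

lemma rieszContentAux_univ (Λ : (X →ᵇ ℝ≥0) →ₗ[ℝ≥0] ℝ≥0) (hΛ1 : Λ 1 = 1) :
    rieszContentAux Λ ⟨Set.univ, isCompact_univ⟩ = 1 := by
  refine le_antisymm ?_ ?_
  · have := rieszContentAux_le Λ (K := ⟨Set.univ, isCompact_univ⟩)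
      (f := 1) (fun x _ => le_refl _)
    rwa [hΛ1] at this
  · refine le_csInf (rieszContentAux_image_nonempty Λ _) ?_
    rintro b ⟨f, hf, rfl⟩
    rw [← hΛ1]
    refine lin_mono Λ 1 f fun x => ?_
    simpa using hf x trivial

lemma rieszContentAux_smul_le (Λ : (X →ᵇ ℝ≥0) →ₗ[ℝ≥0] ℝ≥0)
    (hinv : ∀ (γ : Γ) (f : X →ᵇ ℝ≥0),
      Λ (f.compContinuous ⟨fun x => γ • x, continuous_const_smul γ⟩) = Λ f)
    (γ : Γ) (K : TopologicalSpace.Compacts X) :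
    rieszContentAux Λ (K.map (fun x => γ • x) (continuous_const_smul γ)) ≤
      rieszContentAux Λ K := by
  refine le_csInf (rieszContentAux_image_nonempty Λ K) ?_
  rintro b ⟨f, hf, rfl⟩
  rw [← hinv γ⁻¹ f]
  refine rieszContentAux_le Λ ?_
  rintro x ⟨y, hy, rfl⟩
  simp only [BoundedContinuousFunction.compContinuous_apply, ContinuousMap.coe_mk,
    inv_smul_smul]
  exact hf y hy

lemma rieszContentAux_smul (Λ : (X →ᵇ ℝ≥0) →ₗ[ℝ≥0] ℝ≥0)
    (hinv : ∀ (γ : Γ) (f : X →ᵇ ℝ≥0),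
      Λ (f.compContinuous ⟨fun x => γ • x, continuous_const_smul γ⟩) = Λ f)
    (γ : Γ) (K : TopologicalSpace.Compacts X) :
    rieszContentAux Λ (K.map (fun x => γ • x) (continuous_const_smul γ)) =
      rieszContentAux Λ K := by
  refine le_antisymm (rieszContentAux_smul_le Λ hinv γ K) ?_
  have hKK : ((K.map (fun x => γ • x) (continuous_const_smul γ)).map
      (fun x => γ⁻¹ • x) (continuous_const_smul γ⁻¹)) = K := by
    ext x
    simp only [TopologicalSpace.Compacts.coe_map, Set.image_image, inv_smul_smul]
    simp
  have := rieszContentAux_smul_le Λ hinv γ⁻¹ (K.map (fun x => γ • x) (continuous_const_smul γ))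
  rwa [hKK] at this

end content

section meas
variable {Γ : Type} [Group Γ] {X : Type} [TopologicalSpace X]
    [CompactSpace X] [T2Space X] [MulAction Γ X] [ContinuousConstSMul Γ X]
    [MeasurableSpace X] [BorelSpace X]

def rMeasure (Λ : (X →ᵇ ℝ≥0) →ₗ[ℝ≥0] ℝ≥0) : Measure X := (rContent Λ).measure

lemma rMeasure_univ (Λ : (X →ᵇ ℝ≥0) →ₗ[ℝ≥0] ℝ≥0) (hΛ1 : Λ 1 = 1) :
    rMeasure Λ Set.univ = 1 := by
  rw [rMeasure, Content.measure_apply _ MeasurableSet.univ]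
  have h1 : (rContent Λ).outerMeasure Set.univ =
      (rContent Λ).innerContent ⟨Set.univ, isOpen_univ⟩ :=
    Content.outerMeasure_of_isOpen _ _ isOpen_univ
  rw [h1, Content.innerContent_of_isCompact _ isCompact_univ isOpen_univ]
  show ((rContent Λ).toFun _ : ℝ≥0∞) = 1
  show ((rieszContentAux Λ _ : ℝ≥0) : ℝ≥0∞) = 1
  rw [show (⟨Set.univ, isCompact_univ⟩ : TopologicalSpace.Compacts X) =
    ⟨Set.univ, isCompact_univ⟩ from rfl, rieszContentAux_univ Λ hΛ1]
  simp

lemma rMeasure_smul (Λ : (X →ᵇ ℝ≥0) →ₗ[ℝ≥0] ℝ≥0)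
    (hinv : ∀ (γ : Γ) (f : X →ᵇ ℝ≥0),
      Λ (f.compContinuous ⟨fun x => γ • x, continuous_const_smul γ⟩) = Λ f)
    (γ : Γ) (A : Set X) (hA : MeasurableSet A) : rMeasure Λ (γ • A) = rMeasure Λ A := by
  have hpre : (⇑(Homeomorph.smul γ⁻¹) ⁻¹' A) = γ • A := by
    ext x
    simp only [Set.mem_preimage, Homeomorph.smul_apply]
    exact (Set.mem_smul_set_iff_inv_smul_mem).symm
  have hA2 : MeasurableSet (γ • A) := by
    rw [← hpre]
    exact (Homeomorph.smul γ⁻¹).measurable hA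
  rw [rMeasure, Content.measure_apply _ hA2, Content.measure_apply _ hA, ← hpre]
  refine Content.outerMeasure_preimage (rContent Λ) (Homeomorph.smul γ⁻¹) ?_ A
  intro K
  show ((rieszContentAux Λ _ : ℝ≥0) : ℝ≥0∞) = ((rieszContentAux Λ K : ℝ≥0) : ℝ≥0∞)
  norm_cast
  have : (TopologicalSpace.Compacts.map (⇑(Homeomorph.smul γ⁻¹))
      (Homeomorph.continuous _) K) =
      (TopologicalSpace.Compacts.map (fun x => γ⁻¹ • x) (continuous_const_smul γ⁻¹) K) := by
    ext x
    simp [Homeomorph.smul_apply]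
  rw [this, rieszContentAux_smul Λ hinv γ⁻¹ K]

end meas


section backward

variable {Γ : Type} [Group Γ] {X : Type} [TopologicalSpace X]
    [CompactSpace X] [T2Space X] [MulAction Γ X] [ContinuousConstSMul Γ X]
    [MeasurableSpace X] [BorelSpace X]
    (μ : Measure X) [IsProbabilityMeasure μ]

lemma memL2_mul (f : C(X, ℂ)) (g : Lp ℂ 2 μ) : MemLp (fun x => f x * g x) 2 μ := by
  refine MemLp.of_le_mul (c := ‖f‖) (Lp.memLp g)
    (f.continuous.aestronglyMeasurable.mul (Lp.aestronglyMeasurable g)) ?_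
  filter_upwards with x
  rw [norm_mul]
  exact mul_le_mul_of_nonneg_right (f.norm_coe_le_norm x) (norm_nonneg _)

def mulL (f : C(X, ℂ)) : Lp ℂ 2 μ →ₗ[ℂ] Lp ℂ 2 μ where
  toFun g := (memL2_mul μ f g).toLp _
  map_add' a b := by
    show MemLp.toLp _ (memL2_mul μ f (a + b)) = _
    have h : (fun x => f x * (a + b : Lp ℂ 2 μ) x) =ᵐ[μ]
        (fun x => f x * a x) + (fun x => f x * b x) := by
      filter_upwards [Lp.coeFn_add a b] with x hx
      rw [hx]
      simp [mul_add]
    rw [MemLp.toLp_congr (memL2_mul μ f (a + b)) ((memL2_mul μ f a).add (memL2_mul μ f b)) h,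
      MemLp.toLp_add]
  map_smul' c a := by
    show MemLp.toLp _ (memL2_mul μ f (c • a)) = _
    have h : (fun x => f x * (c • a : Lp ℂ 2 μ) x) =ᵐ[μ]
        c • (fun x => f x * a x) := by
      filter_upwards [Lp.coeFn_smul c a] with x hx
      simp only [hx, Pi.smul_apply, smul_eq_mul]
      ring
    rw [MemLp.toLp_congr (memL2_mul μ f (c • a)) ((memL2_mul μ f a).const_smul c) h,
      MemLp.toLp_const_smul]
    · rfl

lemma mulL_norm_le (f : C(X, ℂ)) (g : Lp ℂ 2 μ) : ‖mulL μ f g‖ ≤ ‖f‖ * ‖g‖ := by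
  have hb : eLpNorm (fun x => f x * (g : X → ℂ) x) 2 μ ≤ ‖f‖₊ • eLpNorm (g : X → ℂ) 2 μ := by
    refine eLpNorm_le_nnreal_smul_eLpNorm_of_ae_le_mul ?_ 2
    filter_upwards with x
    rw [← norm_toNNReal, ← norm_toNNReal, ← norm_toNNReal,
      ← Real.toNNReal_mul (norm_nonneg _)]
    refine Real.toNNReal_mono ?_
    rw [norm_mul]
    exact mul_le_mul_of_nonneg_right (f.norm_coe_le_norm x) (norm_nonneg _)
  have hne : ‖f‖₊ • eLpNorm (g : X → ℂ) 2 μ ≠ ⊤ := by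
    rw [ENNReal.smul_def, smul_eq_mul]
    exact ENNReal.mul_ne_top ENNReal.coe_ne_top (Lp.eLpNorm_ne_top g)
  have h1 : ‖mulL μ f g‖ = (eLpNorm (fun x => f x * (g : X → ℂ) x) 2 μ).toReal :=
    Lp.norm_toLp _ (memL2_mul μ f g)
  rw [h1, Lp.norm_def]
  calc (eLpNorm (fun x => f x * (g : X → ℂ) x) 2 μ).toReal
      ≤ (‖f‖₊ • eLpNorm (g : X → ℂ) 2 μ).toReal := ENNReal.toReal_mono hne hb
    _ = ‖f‖ * (eLpNorm (g : X → ℂ) 2 μ).toReal := by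
        rw [ENNReal.smul_def, smul_eq_mul, ENNReal.toReal_mul, ENNReal.coe_toReal,
          coe_nnnorm]

def mulCLM (f : C(X, ℂ)) : Lp ℂ 2 μ →L[ℂ] Lp ℂ 2 μ :=
  LinearMap.mkContinuous (mulL μ f) ‖f‖ (mulL_norm_le μ f)

lemma mulCLM_apply (f : C(X, ℂ)) (g : Lp ℂ 2 μ) :
    (mulCLM μ f g : X → ℂ) =ᵐ[μ] fun x => f x * g x :=
  MemLp.coeFn_toLp (memL2_mul μ f g)

lemma mulCLM_star (f : C(X, ℂ)) : mulCLM μ (star f) = star (mulCLM μ f) := by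
  rw [ContinuousLinearMap.star_eq_adjoint]
  rw [ContinuousLinearMap.eq_adjoint_iff]
  intro a b
  rw [L2.inner_def, L2.inner_def]
  refine integral_congr_ae ?_
  filter_upwards [mulCLM_apply μ (star f) a, mulCLM_apply μ f b] with x h1 h2
  simp only [h1, h2, RCLike.inner_apply, ContinuousMap.star_apply, map_mul, RingHomCompTriple.comp_apply]
  simp [mul_comm, mul_assoc, mul_left_comm]


lemma mulCLM_one : mulCLM μ (1 : C(X, ℂ)) = 1 := by
  refine ContinuousLinearMap.ext fun g => ?_
  refine Lp.ext ?_
  filter_upwards [mulCLM_apply μ 1 g] with x h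
  simpa using h

lemma mulCLM_mul (f₁ f₂ : C(X, ℂ)) : mulCLM μ (f₁ * f₂) = mulCLM μ f₁ * mulCLM μ f₂ := by
  refine ContinuousLinearMap.ext fun g => ?_
  refine Lp.ext ?_
  filter_upwards [mulCLM_apply μ (f₁ * f₂) g, mulCLM_apply μ f₂ g,
    mulCLM_apply μ f₁ (mulCLM μ f₂ g)] with x h1 h2 h3
  rw [ContinuousLinearMap.mul_apply, h1, h3, h2]
  simp [mul_assoc]

lemma mulCLM_zero : mulCLM μ (0 : C(X, ℂ)) = 0 := by
  refine ContinuousLinearMap.ext fun g => ?_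
  refine Lp.ext ?_
  filter_upwards [mulCLM_apply μ 0 g, Lp.coeFn_zero ℂ 2 μ] with x h1 h2
  simpa [h2] using h1

lemma mulCLM_add (f₁ f₂ : C(X, ℂ)) : mulCLM μ (f₁ + f₂) = mulCLM μ f₁ + mulCLM μ f₂ := by
  refine ContinuousLinearMap.ext fun g => ?_
  refine Lp.ext ?_
  filter_upwards [mulCLM_apply μ (f₁ + f₂) g, mulCLM_apply μ f₁ g, mulCLM_apply μ f₂ g,
    Lp.coeFn_add (mulCLM μ f₁ g) (mulCLM μ f₂ g)] with x h1 h2 h3 h4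
  rw [ContinuousLinearMap.add_apply, h1, h4]
  simp [h2, h3, add_mul]

lemma mulCLM_algebraMap (c : ℂ) :
    mulCLM μ (algebraMap ℂ C(X, ℂ) c) = algebraMap ℂ (Lp ℂ 2 μ →L[ℂ] Lp ℂ 2 μ) c := by
  refine ContinuousLinearMap.ext fun g => ?_
  have h0 : ((algebraMap ℂ (Lp ℂ 2 μ →L[ℂ] Lp ℂ 2 μ)) c) g = c • g := by
    rw [Algebra.algebraMap_eq_smul_one, ContinuousLinearMap.smul_apply,
      ContinuousLinearMap.one_apply]
  rw [h0]
  refine Lp.ext ?_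
  filter_upwards [mulCLM_apply μ (algebraMap ℂ C(X, ℂ) c) g, Lp.coeFn_smul c g] with x h1 h2
  rw [h1, h2]
  simp [Algebra.algebraMap_eq_smul_one]

def piRep : C(X, ℂ) →⋆ₐ[ℂ] (Lp ℂ 2 μ →L[ℂ] Lp ℂ 2 μ) where
  toFun f := mulCLM μ f
  map_one' := mulCLM_one μ
  map_mul' := mulCLM_mul μ
  map_zero' := mulCLM_zero μ
  map_add' := mulCLM_add μ
  commutes' := mulCLM_algebraMap μ
  map_star' := fun f => (mulCLM_star μ f).symm.symm

lemma piRep_apply (f : C(X, ℂ)) : piRep μ f = mulCLM μ f := rfl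

section unitaries
variable (hμ : ∀ (g : Γ) (A : Set X), MeasurableSet A → μ (g • A) = μ A)
include hμ

lemma smul_mp (γ : Γ) : MeasurePreserving (fun x : X => γ • x) μ μ := by
  refine ⟨(continuous_const_smul γ).measurable, ?_⟩
  refine Measure.ext fun A hA => ?_
  rw [Measure.map_apply (continuous_const_smul γ).measurable hA, Set.preimage_smul]
  exact hμ γ⁻¹ A hA

def Uc (γ : Γ) : Lp ℂ 2 μ →L[ℂ] Lp ℂ 2 μ :=
  (Lp.compMeasurePreservingₗᵢ ℂ (fun x : X => γ⁻¹ • x) (smul_mp μ hμ γ⁻¹)).toContinuousLinearMap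

lemma Uc_apply (γ : Γ) (g : Lp ℂ 2 μ) :
    (Uc μ hμ γ g : X → ℂ) =ᵐ[μ] fun x => g (γ⁻¹ • x) :=
  Lp.coeFn_compMeasurePreserving g (smul_mp μ hμ γ⁻¹)

lemma qmp (γ : Γ) : Measure.QuasiMeasurePreserving (fun x : X => γ • x) μ μ :=
  (smul_mp μ hμ γ).quasiMeasurePreserving

lemma Uc_one : Uc μ hμ (1 : Γ) = 1 := by
  refine ContinuousLinearMap.ext fun g => ?_
  refine Lp.ext ?_
  filter_upwards [Uc_apply μ hμ 1 g] with x h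
  simpa using h

lemma Uc_mul (γ δ : Γ) : Uc μ hμ γ * Uc μ hμ δ = Uc μ hμ (γ * δ) := by
  refine ContinuousLinearMap.ext fun g => ?_
  refine Lp.ext ?_
  have h2 : ((Uc μ hμ δ g : X → ℂ) ∘ fun x : X => γ⁻¹ • x) =ᵐ[μ]
      ((fun x => g (δ⁻¹ • x)) ∘ fun x : X => γ⁻¹ • x) :=
    (qmp μ hμ γ⁻¹).ae_eq_comp (Uc_apply μ hμ δ g)
  filter_upwards [Uc_apply μ hμ γ (Uc μ hμ δ g), h2, Uc_apply μ hμ (γ * δ) g] with x h1 h2' h3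
  rw [ContinuousLinearMap.mul_apply, h1]
  have : (Uc μ hμ δ g : X → ℂ) (γ⁻¹ • x) = g (δ⁻¹ • γ⁻¹ • x) := h2'
  rw [this, h3, mul_inv_rev, mul_smul]

lemma Uc_unitary (γ : Γ) : Uc μ hμ γ ∈ unitary (Lp ℂ 2 μ →L[ℂ] Lp ℂ 2 μ) := by
  have hstar : ∀ δ : Γ, star (Uc μ hμ δ) * Uc μ hμ δ = 1 := by
    intro δ
    refine ContinuousLinearMap.ext fun a => ?_
    refine ext_inner_right ℂ fun b => ?_
    rw [ContinuousLinearMap.mul_apply, ContinuousLinearMap.star_eq_adjoint,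
      ContinuousLinearMap.adjoint_inner_left, ContinuousLinearMap.one_apply]
    exact (Lp.compMeasurePreservingₗᵢ ℂ (fun x : X => δ⁻¹ • x)
      (smul_mp μ hμ δ⁻¹)).inner_map_map a b
  have hinv : Uc μ hμ γ * Uc μ hμ γ⁻¹ = 1 := by
    rw [Uc_mul, mul_inv_cancel]; exact Uc_one μ hμ
  have hinv' : Uc μ hμ γ⁻¹ * Uc μ hμ γ = 1 := by
    rw [Uc_mul, inv_mul_cancel]; exact Uc_one μ hμ
  have hstar_eq : star (Uc μ hμ γ) = Uc μ hμ γ⁻¹ := by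
    calc star (Uc μ hμ γ) = star (Uc μ hμ γ) * (Uc μ hμ γ * Uc μ hμ γ⁻¹) := by rw [hinv, mul_one]
      _ = (star (Uc μ hμ γ) * Uc μ hμ γ) * Uc μ hμ γ⁻¹ := by rw [mul_assoc]
      _ = Uc μ hμ γ⁻¹ := by rw [hstar γ, one_mul]
  exact ⟨hstar γ, by rw [hstar_eq]; exact hinv⟩

def uRep : Γ →* unitary (Lp ℂ 2 μ →L[ℂ] Lp ℂ 2 μ) where
  toFun γ := ⟨Uc μ hμ γ, Uc_unitary μ hμ γ⟩
  map_one' := Subtype.ext (Uc_one μ hμ)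
  map_mul' γ δ := Subtype.ext (Uc_mul μ hμ γ δ).symm

end unitaries

section covariance
variable (hμ : ∀ (g : Γ) (A : Set X), MeasurableSet A → μ (g • A) = μ A)
include hμ

lemma covariant_rep (γ : Γ) (f : C(X, ℂ)) :
    Uc μ hμ γ * mulCLM μ f * Uc μ hμ γ⁻¹ =
      mulCLM μ (f.comp ⟨fun x => γ⁻¹ • x, continuous_const_smul γ⁻¹⟩) := by
  refine ContinuousLinearMap.ext fun g => ?_
  refine Lp.ext ?_
  have e1 : (Uc μ hμ γ (mulCLM μ f (Uc μ hμ γ⁻¹ g)) : X → ℂ) =ᵐ[μ]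
      fun x => (mulCLM μ f (Uc μ hμ γ⁻¹ g) : X → ℂ) (γ⁻¹ • x) :=
    Uc_apply μ hμ γ _
  have e2 : ((mulCLM μ f (Uc μ hμ γ⁻¹ g) : X → ℂ) ∘ fun x : X => γ⁻¹ • x) =ᵐ[μ]
      ((fun x => f x * (Uc μ hμ γ⁻¹ g : X → ℂ) x) ∘ fun x : X => γ⁻¹ • x) :=
    (qmp μ hμ γ⁻¹).ae_eq_comp (mulCLM_apply μ f _)
  have e3 : (((Uc μ hμ γ⁻¹ g : X → ℂ)) ∘ fun x : X => γ⁻¹ • x) =ᵐ[μ]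
      ((fun x => (g : X → ℂ) ((γ⁻¹)⁻¹ • x)) ∘ fun x : X => γ⁻¹ • x) :=
    (qmp μ hμ γ⁻¹).ae_eq_comp (Uc_apply μ hμ γ⁻¹ g)
  simp only [Function.comp_def] at e2 e3
  filter_upwards [e1, e2, e3,
    mulCLM_apply μ (f.comp ⟨fun x => γ⁻¹ • x, continuous_const_smul γ⁻¹⟩) g] with x h1 h2 h3 h4
  rw [ContinuousLinearMap.mul_apply, ContinuousLinearMap.mul_apply, h1, h2, h3, h4]
  simp [smul_inv_smul]

lemma xiv_fixed (γ : Γ) : Uc μ hμ γ (Lp.const 2 μ (1 : ℂ)) = Lp.const 2 μ (1 : ℂ) := by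
  refine Lp.ext ?_
  have e2 : ((Lp.const 2 μ (1 : ℂ) : X → ℂ) ∘ fun x : X => γ⁻¹ • x) =ᵐ[μ]
      ((fun _ : X => (1 : ℂ)) ∘ fun x : X => γ⁻¹ • x) :=
    (qmp μ hμ γ⁻¹).ae_eq_comp (Lp.coeFn_const 2 μ (1 : ℂ))
  simp only [Function.comp_def] at e2
  filter_upwards [Uc_apply μ hμ γ (Lp.const 2 μ (1 : ℂ)), e2,
    Lp.coeFn_const 2 μ (1 : ℂ)] with x h1 h2 h3
  rw [h1, h2, h3]
  rfl

end covariance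

lemma xiv_ne_zero : Lp.const 2 μ (1 : ℂ) ≠ 0 := by
  have h : ‖Lp.const 2 μ (1 : ℂ)‖ = 1 := by
    rw [Lp.norm_const 2 μ (1 : ℂ) two_ne_zero]
    simp
  intro hc
  rw [hc] at h
  simp at h


end backward

end CovPairAux

/-- There exist a Hilbert space `H`, a covariant pair `(π, u)` on `H`, and a nonzero
vector `ξ ∈ H` with `u_g ξ = ξ` for all `g ∈ Γ`, if and only if `X` admits a
`Γ`-invariant Borel probability measure. -/
theorem exists_fixed_vector_iff_invariant_measure (Γ : Type) [Group Γ] (X : Type)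
    [TopologicalSpace X] [CompactSpace X] [T2Space X] [MulAction Γ X]
    [ContinuousConstSMul Γ X] [MeasurableSpace X] [BorelSpace X] :
    Nonempty (CovariantPairWithFixedVector Γ X) ↔
      ∃ μ : MeasureTheory.Measure X, InvariantProbMeasure Γ X μ := by
  constructor
  · rintro ⟨cpw⟩
    letI := cpw.instNormed
    letI := cpw.instInner
    letI := cpw.instComplete
    set ξ0 : cpw.H := ((‖cpw.ξ‖ : ℂ))⁻¹ • cpw.ξ with hξ0
    have hnorm : ‖ξ0‖ = 1 := by
      rw [hξ0, norm_smul, norm_inv, Complex.norm_real, Real.norm_eq_abs,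
        abs_of_nonneg (norm_nonneg _)]
      exact inv_mul_cancel₀ (norm_ne_zero_iff.2 cpw.ξ_ne_zero)
    have hfix : ∀ γ : Γ, ((cpw.cp.u γ : cpw.H →L[ℂ] cpw.H)) ξ0 = ξ0 := by
      intro γ
      rw [hξ0, _root_.map_smul, cpw.ξ_fixed γ]
    refine ⟨CovPairAux.rMeasure (CovPairAux.Lam cpw.cp ξ0), ⟨?_⟩, ?_⟩
    · exact CovPairAux.rMeasure_univ _ (CovPairAux.Lam_one cpw.cp ξ0 hnorm)
    · intro g A hA
      exact CovPairAux.rMeasure_smul _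
        (fun γ f => CovPairAux.Lam_comp_inv cpw.cp ξ0 hfix γ f) g A hA
  · rintro ⟨μ, hprob, hinv⟩
    haveI := hprob
    exact ⟨{ H := MeasureTheory.Lp ℂ 2 μ
             cp := { π := CovPairAux.piRep μ
                     u := CovPairAux.uRep μ hinv
                     covariant := fun g f => CovPairAux.covariant_rep μ hinv g f }
             ξ := MeasureTheory.Lp.const 2 μ (1 : ℂ)
             ξ_ne_zero := CovPairAux.xiv_ne_zero μ
             ξ_fixed := fun γ => CovPairAux.xiv_fixed μ hinv γ }⟩

end
end

section
/- Let Γ be a discrete group acting by homeomorphisms on a compact Hausdorff space X, and let μ be a Γ-invariant Borel probability measure on X. Then for every unitary representation (H, u) of Γ there exist a complex Hilbert space H′, a covariant pair (π′, u′) on H′, and a linear isometry V : H → H′ such that V u_g = u′_g V for all g ∈ Γ. (Key step in the proof that, in the presence of an invariant probability measure, property (T) with respect to representations arising from covariant pairs is equivalent to property (T): every unitary representation of Γ is a subrepresentation of the group part of a covariant pair.) -/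
open scoped InnerProductSpace Pointwise


noncomputable section

/-- The data of a covariant pair `(π′, u′)` on a Hilbert space `H′` together with a
linear isometry `V : H → H′` intertwining a given unitary representation `u` of `Γ` on
`H` with `u′`. -/
structure CovariantDilation (Γ : Type) [Group Γ] (X : Type) [TopologicalSpace X]
    [CompactSpace X] [T2Space X] [MulAction Γ X] [ContinuousConstSMul Γ X]
    (H : Type) [NormedAddCommGroup H] [InnerProductSpace ℂ H] [CompleteSpace H]
    (u : Γ →* unitary (H →L[ℂ] H)) : Type 1 where
  H' : Type
  [instNormed : NormedAddCommGroup H']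
  [instInner : InnerProductSpace ℂ H']
  [instComplete : CompleteSpace H']
  cp : CovariantPair Γ X H'
  V : H →ₗᵢ[ℂ] H'
  intertwine : ∀ (g : Γ) (ξ : H), V ((u g : H →L[ℂ] H) ξ) = (cp.u g : H' →L[ℂ] H') (V ξ)

set_option linter.unusedSectionVars false

namespace CovDilAux

open MeasureTheory ContinuousLinearMap

set_option linter.unusedSectionVars false

variable {Γ : Type} [Group Γ] {X : Type}
  [TopologicalSpace X] [CompactSpace X] [T2Space X] [MulAction Γ X]
  [ContinuousConstSMul Γ X] [MeasurableSpace X] [BorelSpace X]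
  {μ : MeasureTheory.Measure X}
  {H : Type} [NormedAddCommGroup H] [InnerProductSpace ℂ H] [CompleteSpace H]

lemma mp (hinv : ∀ (g : Γ) (A : Set X), MeasurableSet A → μ (g • A) = μ A) (g : Γ) :
    MeasurePreserving (fun x : X => g • x) μ μ := by
  refine ⟨(continuous_const_smul g).measurable, ?_⟩
  ext A hA
  rw [MeasureTheory.Measure.map_apply (continuous_const_smul g).measurable hA,
    Set.preimage_smul]
  exact hinv g⁻¹ A hA

/-- Composition with a measure preserving map, as a continuous linear map on `L²`. -/
def cLM {T : X → X} (hT : MeasurePreserving T μ μ) : Lp H 2 μ →L[ℂ] Lp H 2 μ :=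
  LinearMap.mkContinuous
    { toFun := Lp.compMeasurePreserving T hT
      map_add' := map_add _
      map_smul' := fun c ξ => by
        refine Lp.ext ?_
        have h1 := Lp.coeFn_compMeasurePreserving (μ := μ) (c • ξ) hT
        have h2 := Lp.coeFn_compMeasurePreserving (μ := μ) ξ hT
        have h3 : ⇑(c • ξ) ∘ T =ᵐ[μ] (c • ⇑ξ) ∘ T :=
          hT.quasiMeasurePreserving.ae_eq_comp (Lp.coeFn_smul c ξ)
        have h4 := Lp.coeFn_smul c (Lp.compMeasurePreserving T hT ξ)
        filter_upwards [h1, h3, h2, h4] with x h1 h3 h2 h4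
        simp only [Function.comp_apply, Pi.smul_apply, RingHom.id_apply] at *
        rw [h1, h3, h4, h2] }
    1 (fun ξ => by
      simpa using (Lp.norm_compMeasurePreserving ξ hT).le)

lemma coeFn_cLM {T : X → X} (hT : MeasurePreserving T μ μ) (ξ : Lp H 2 μ) :
    cLM (H := H) hT ξ =ᵐ[μ] ⇑ξ ∘ T :=
  Lp.coeFn_compMeasurePreserving ξ hT


lemma memℒp_top_cm (f : C(X, ℂ)) : MemLp (⇑f) ⊤ μ :=
  memLp_top_of_bound f.continuous.aestronglyMeasurable ‖f‖
    (Filter.Eventually.of_forall fun x => f.norm_coe_le_norm x)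

lemma memMul (f : C(X, ℂ)) (ξ : Lp H 2 μ) : MemLp (⇑f • ⇑ξ) 2 μ :=
  (Lp.memLp ξ).smul (memℒp_top_cm f)

/-- Pointwise multiplication by a continuous function, as a map on `L²`. -/
def mulFun (f : C(X, ℂ)) (ξ : Lp H 2 μ) : Lp H 2 μ := (memMul f ξ).toLp _

lemma coeFn_mulFun (f : C(X, ℂ)) (ξ : Lp H 2 μ) :
    mulFun f ξ =ᵐ[μ] fun x => f x • ξ x :=
  MemLp.coeFn_toLp _

lemma norm_mulFun_le (f : C(X, ℂ)) (ξ : Lp H 2 μ) : ‖mulFun f ξ‖ ≤ ‖f‖ * ‖ξ‖ := by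
  rw [mulFun, Lp.norm_toLp]
  have htop : eLpNorm (⇑f) ⊤ μ ≤ ENNReal.ofReal ‖f‖ := by
    rw [eLpNorm_exponent_top]
    exact eLpNormEssSup_le_of_ae_bound
      (Filter.Eventually.of_forall fun x => f.norm_coe_le_norm x)
  have h1 : eLpNorm (⇑f • ⇑ξ) 2 μ ≤ ENNReal.ofReal ‖f‖ * eLpNorm (⇑ξ) 2 μ :=
    (eLpNorm_smul_le_eLpNorm_top_mul_eLpNorm 2 (Lp.aestronglyMeasurable ξ) ⇑f).trans
      (mul_le_mul_left htop _)
  have h2 : (ENNReal.ofReal ‖f‖ * eLpNorm (⇑ξ) 2 μ).toReal = ‖f‖ * ‖ξ‖ := by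
    rw [ENNReal.toReal_mul, ENNReal.toReal_ofReal (norm_nonneg f), Lp.norm_def]
  rw [← h2]
  exact ENNReal.toReal_mono
    (ENNReal.mul_ne_top ENNReal.ofReal_ne_top (Lp.eLpNorm_ne_top ξ)) h1

/-- Pointwise multiplication by a continuous function, as a continuous linear map. -/
def mulOp (μ : MeasureTheory.Measure X) (f : C(X, ℂ)) : Lp H 2 μ →L[ℂ] Lp H 2 μ :=
  LinearMap.mkContinuous
    { toFun := mulFun f
      map_add' := fun ξ η => by
        refine Lp.ext ?_
        filter_upwards [coeFn_mulFun f (ξ + η), coeFn_mulFun f ξ, coeFn_mulFun f η,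
          Lp.coeFn_add ξ η, Lp.coeFn_add (mulFun f ξ) (mulFun f η)] with x h1 h2 h3 h4 h5
        simp only [Pi.add_apply] at *
        rw [h1, h5, h2, h3, h4, smul_add]
      map_smul' := fun c ξ => by
        refine Lp.ext ?_
        filter_upwards [coeFn_mulFun f (c • ξ), coeFn_mulFun f ξ, Lp.coeFn_smul c ξ,
          Lp.coeFn_smul c (mulFun f ξ)] with x h1 h2 h3 h4
        simp only [Pi.smul_apply, RingHom.id_apply] at *
        rw [h1, h4, h2, h3, smul_comm] }
    ‖f‖ (fun ξ => norm_mulFun_le f ξ)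

lemma coeFn_mulOp (f : C(X, ℂ)) (ξ : Lp H 2 μ) :
    mulOp (H := H) μ f ξ =ᵐ[μ] fun x => f x • ξ x :=
  coeFn_mulFun f ξ


set_option maxHeartbeats 1000000 in
/-- The multiplication representation of `C(X, ℂ)` on `L²(X, μ; H)`. -/
def piOp : C(X, ℂ) →⋆ₐ[ℂ] (Lp H 2 μ →L[ℂ] Lp H 2 μ) where
  toFun := mulOp μ
  map_one' := by
    refine ContinuousLinearMap.ext fun ξ => Lp.ext ?_
    filter_upwards [coeFn_mulOp (μ := μ) (H := H) 1 ξ] with x h1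
    simp only [ContinuousMap.one_apply, one_smul] at h1
    rw [ContinuousLinearMap.one_apply]
    exact h1
  map_mul' f f' := by
    refine ContinuousLinearMap.ext fun ξ => Lp.ext ?_
    filter_upwards [coeFn_mulOp (μ := μ) (H := H) (f * f') ξ,
      coeFn_mulOp (μ := μ) (H := H) f (mulOp μ f' ξ),
      coeFn_mulOp (μ := μ) (H := H) f' ξ] with x h1 h2 h3
    simp only [ContinuousLinearMap.mul_apply]
    rw [h1, h2, h3, ContinuousMap.mul_apply, mul_smul]
  map_zero' := by
    refine ContinuousLinearMap.ext fun ξ => Lp.ext ?_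
    filter_upwards [coeFn_mulOp (μ := μ) (H := H) 0 ξ,
      Lp.coeFn_zero H 2 μ] with x h1 h2
    simp only [ContinuousLinearMap.zero_apply]
    rw [h1, h2]
    simp
  map_add' f f' := by
    refine ContinuousLinearMap.ext fun ξ => Lp.ext ?_
    filter_upwards [coeFn_mulOp (μ := μ) (H := H) (f + f') ξ,
      coeFn_mulOp (μ := μ) (H := H) f ξ, coeFn_mulOp (μ := μ) (H := H) f' ξ,
      Lp.coeFn_add (mulOp μ f ξ) (mulOp μ f' ξ)] with x h1 h2 h3 h4
    simp only [ContinuousLinearMap.add_apply]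
    rw [h1, h4, Pi.add_apply, h2, h3, ContinuousMap.add_apply, add_smul]
  commutes' c := by
    refine ContinuousLinearMap.ext fun ξ => Lp.ext ?_
    filter_upwards [coeFn_mulOp (μ := μ) (H := H) (algebraMap ℂ C(X, ℂ) c) ξ,
      Lp.coeFn_smul c ξ] with x h1 h2
    rw [h1]
    have : (algebraMap ℂ (Lp H 2 μ →L[ℂ] Lp H 2 μ) c) ξ = c • ξ := by
      rw [Algebra.algebraMap_eq_smul_one]
      simp
    rw [this, h2]
    simp [Algebra.algebraMap_eq_smul_one]
  map_star' f := by
    have h : ∀ ξ η : Lp H 2 μ, (inner ℂ (mulOp μ (star f) ξ) η : ℂ) = inner ℂ ξ (mulOp μ f η) := by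
      intro ξ η
      rw [MeasureTheory.L2.inner_def, MeasureTheory.L2.inner_def]
      refine MeasureTheory.integral_congr_ae ?_
      filter_upwards [coeFn_mulOp (μ := μ) (H := H) (star f) ξ,
        coeFn_mulOp (μ := μ) (H := H) f η] with x h1 h2
      rw [h1, h2, inner_smul_left, inner_smul_right]
      simp [ContinuousMap.star_apply]
    exact ((ContinuousLinearMap.eq_adjoint_iff _ _).mpr h).trans
      (ContinuousLinearMap.star_eq_adjoint _).symm


variable (u : Γ →* unitary (H →L[ℂ] H))

/-- The group part of the covariant pair on `L²(X, μ; H)`: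
`(U_g ξ)(x) = u_g (ξ (g⁻¹ • x))`. -/
def Ug (hinv : ∀ (g : Γ) (A : Set X), MeasurableSet A → μ (g • A) = μ A) (g : Γ) :
    Lp H 2 μ →L[ℂ] Lp H 2 μ :=
  ((u g : H →L[ℂ] H).compLpL 2 μ).comp (cLM (mp hinv g⁻¹))

variable {u}

lemma coeFn_Ug (hinv : ∀ (g : Γ) (A : Set X), MeasurableSet A → μ (g • A) = μ A)
    (g : Γ) (ξ : Lp H 2 μ) :
    Ug u hinv g ξ =ᵐ[μ] fun x => (u g : H →L[ℂ] H) (ξ (g⁻¹ • x)) := by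
  filter_upwards [(u g : H →L[ℂ] H).coeFn_compLpL (cLM (mp hinv g⁻¹) ξ),
    coeFn_cLM (mp hinv g⁻¹) ξ] with x h1 h2
  have hUg : Ug u hinv g ξ = (u g : H →L[ℂ] H).compLpL 2 μ (cLM (mp hinv g⁻¹) ξ) := rfl
  rw [hUg, h1, h2, Function.comp_apply]

lemma norm_Ug (hinv : ∀ (g : Γ) (A : Set X), MeasurableSet A → μ (g • A) = μ A)
    (g : Γ) (ξ : Lp H 2 μ) : ‖Ug u hinv g ξ‖ = ‖ξ‖ := by
  have e1 : eLpNorm (⇑(Ug u hinv g ξ)) 2 μ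
      = eLpNorm (⇑(Lp.compMeasurePreserving _ (mp hinv g⁻¹) ξ)) 2 μ := by
    rw [eLpNorm_congr_ae (coeFn_Ug hinv g ξ),
      eLpNorm_congr_ae (Lp.coeFn_compMeasurePreserving ξ (mp hinv g⁻¹))]
    exact eLpNorm_congr_norm_ae (Filter.Eventually.of_forall fun x => by
      rw [Function.comp_apply]
      exact Unitary.norm_map (u g) _)
  calc ‖Ug u hinv g ξ‖ = ‖Lp.compMeasurePreserving _ (mp hinv g⁻¹) ξ‖ := by
        rw [Lp.norm_def, Lp.norm_def, e1]
    _ = ‖ξ‖ := Lp.norm_compMeasurePreserving ξ _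

lemma u_coe_comp (g h : Γ) (v : H) (hgh : g * h = 1) :
    (u g : H →L[ℂ] H) ((u h : H →L[ℂ] H) v) = v := by
  have h6 : (u g) * (u h) = 1 := by rw [← map_mul, hgh, map_one]
  have h7 : (u g : H →L[ℂ] H) * (u h : H →L[ℂ] H) = 1 := by
    rw [← MulMemClass.coe_mul, h6, OneMemClass.coe_one]
  calc (u g : H →L[ℂ] H) ((u h : H →L[ℂ] H) v)
      = ((u g : H →L[ℂ] H) * (u h : H →L[ℂ] H)) v := rfl
    _ = v := by rw [h7, ContinuousLinearMap.one_apply]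

lemma Ug_mul (hinv : ∀ (g : Γ) (A : Set X), MeasurableSet A → μ (g • A) = μ A)
    (g h : Γ) : Ug u (H := H) hinv (g * h) = Ug u hinv g * Ug u hinv h := by
  refine ContinuousLinearMap.ext fun ξ => Lp.ext ?_
  have h3 : (⇑(Ug u hinv h ξ)) ∘ (fun x : X => g⁻¹ • x)
      =ᵐ[μ] (fun y => (u h : H →L[ℂ] H) (ξ (h⁻¹ • y))) ∘ (fun x : X => g⁻¹ • x) :=
    (mp hinv g⁻¹).quasiMeasurePreserving.ae_eq_comp (coeFn_Ug hinv h ξ)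
  filter_upwards [coeFn_Ug hinv (g * h) ξ, coeFn_Ug hinv g (Ug u hinv h ξ), h3]
    with x h1 h2 h3
  rw [ContinuousLinearMap.mul_apply, h1, h2]
  simp only [Function.comp_apply] at h3
  rw [h3, mul_inv_rev, mul_smul]
  have h4 : u (g * h) = u g * u h := map_mul u g h
  rw [h4, MulMemClass.coe_mul, ContinuousLinearMap.mul_apply]

lemma Ug_one (hinv : ∀ (g : Γ) (A : Set X), MeasurableSet A → μ (g • A) = μ A) :
    Ug u (H := H) hinv 1 = 1 := by
  refine ContinuousLinearMap.ext fun ξ => Lp.ext ?_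
  filter_upwards [coeFn_Ug hinv 1 ξ] with x h1
  rw [ContinuousLinearMap.one_apply, h1, inv_one, one_smul, map_one,
    OneMemClass.coe_one, ContinuousLinearMap.one_apply]

lemma Ug_mem (hinv : ∀ (g : Γ) (A : Set X), MeasurableSet A → μ (g • A) = μ A)
    (g : Γ) : Ug u (H := H) hinv g ∈ unitary (Lp H 2 μ →L[ℂ] Lp H 2 μ) := by
  have hst : star (Ug u (H := H) hinv g) * Ug u hinv g = 1 := by
    rw [ContinuousLinearMap.star_eq_adjoint]
    exact (ContinuousLinearMap.norm_map_iff_adjoint_comp_self _).mp (norm_Ug hinv g)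
  have hr : Ug u (H := H) hinv g * Ug u hinv g⁻¹ = 1 := by
    rw [← Ug_mul, mul_inv_cancel, Ug_one]
  have hstar : star (Ug u (H := H) hinv g) = Ug u hinv g⁻¹ := by
    calc star (Ug u (H := H) hinv g)
        = star (Ug u (H := H) hinv g) * (Ug u hinv g * Ug u hinv g⁻¹) := by
          rw [hr, mul_one]
      _ = (star (Ug u (H := H) hinv g) * Ug u hinv g) * Ug u hinv g⁻¹ := by
          rw [mul_assoc]
      _ = Ug u hinv g⁻¹ := by rw [hst, one_mul]
  exact Unitary.mem_iff.mpr ⟨hst, by rw [hstar]; exact hr⟩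

variable (u)

/-- The unitary representation of `Γ` on `L²(X, μ; H)`. -/
def uOp (hinv : ∀ (g : Γ) (A : Set X), MeasurableSet A → μ (g • A) = μ A) :
    Γ →* unitary (Lp H 2 μ →L[ℂ] Lp H 2 μ) :=
  MonoidHom.mk' (fun g => ⟨Ug u hinv g, Ug_mem hinv g⟩)
    (fun g h => Subtype.ext (Ug_mul hinv g h))

variable {u}

lemma covar (hinv : ∀ (g : Γ) (A : Set X), MeasurableSet A → μ (g • A) = μ A)
    (g : Γ) (f : C(X, ℂ)) :
    Ug u (H := H) hinv g * mulOp μ f * Ug u hinv g⁻¹ =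
      mulOp μ (f.comp ⟨fun x => g⁻¹ • x, continuous_const_smul g⁻¹⟩) := by
  refine ContinuousLinearMap.ext fun ξ => Lp.ext ?_
  set η := mulOp μ f (Ug u hinv g⁻¹ ξ) with hη
  have h23 : ⇑η =ᵐ[μ] fun y => f y • (u g⁻¹ : H →L[ℂ] H) (ξ (g • y)) := by
    filter_upwards [coeFn_mulOp (μ := μ) (H := H) f (Ug u hinv g⁻¹ ξ),
      coeFn_Ug hinv g⁻¹ ξ] with y h2 h3
    rw [h2, h3, inv_inv]
  have h4 : (⇑η) ∘ (fun x : X => g⁻¹ • x)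
      =ᵐ[μ] (fun y => f y • (u g⁻¹ : H →L[ℂ] H) (ξ (g • y))) ∘ (fun x : X => g⁻¹ • x) :=
    (mp hinv g⁻¹).quasiMeasurePreserving.ae_eq_comp h23
  filter_upwards [coeFn_Ug hinv g η,
    coeFn_mulOp (μ := μ) (H := H) (f.comp ⟨fun x => g⁻¹ • x, continuous_const_smul g⁻¹⟩) ξ,
    h4] with x h1 h5 h4
  rw [ContinuousLinearMap.mul_apply, ContinuousLinearMap.mul_apply, ← hη, h1]
  simp only [Function.comp_apply] at h4
  rw [h4, _root_.map_smul, smul_inv_smul, u_coe_comp g g⁻¹ _ (mul_inv_cancel g), h5,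
    ContinuousMap.comp_apply, ContinuousMap.coe_mk]
  rfl

/-- The isometric embedding of `H` into `L²(X, μ; H)` as constant functions. -/
def Vmap (μ : MeasureTheory.Measure X) [MeasureTheory.IsProbabilityMeasure μ] :
    H →ₗᵢ[ℂ] Lp H 2 μ where
  toLinearMap :=
    { toFun := Lp.const 2 μ
      map_add' := map_add _
      map_smul' := fun c ξ => by
        refine Lp.ext ?_
        filter_upwards [Lp.coeFn_const 2 μ (c • ξ),
          Lp.coeFn_smul c (Lp.const 2 μ ξ),
          Lp.coeFn_const 2 μ ξ] with x h1 h2 h3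
        rw [RingHom.id_apply, h1, h2, Pi.smul_apply, h3]
        rfl }
  norm_map' := fun ξ => by
    show ‖Lp.const 2 μ ξ‖ = ‖ξ‖
    rw [Lp.norm_const 2 μ ξ (by norm_num)]
    simp

lemma intertwine (hinv : ∀ (g : Γ) (A : Set X), MeasurableSet A → μ (g • A) = μ A)
    [MeasureTheory.IsProbabilityMeasure μ] (g : Γ) (ξ : H) :
    Vmap μ ((u g : H →L[ℂ] H) ξ) = Ug u hinv g (Vmap μ ξ) := by
  have hV : ∀ ζ : H, Vmap μ ζ = Lp.const 2 μ ζ := fun _ => rfl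
  rw [hV, hV]
  refine Lp.ext ?_
  have h3 : (⇑(Lp.const (E := H) 2 μ ξ)) ∘ (fun x : X => g⁻¹ • x)
      =ᵐ[μ] (Function.const X ξ) ∘ (fun x : X => g⁻¹ • x) :=
    (mp hinv g⁻¹).quasiMeasurePreserving.ae_eq_comp
      (Lp.coeFn_const 2 μ ξ)
  filter_upwards [Lp.coeFn_const 2 μ ((u g : H →L[ℂ] H) ξ),
    coeFn_Ug hinv g (Lp.const 2 μ ξ), h3] with x h1 h2 h3
  rw [h1, h2]
  simp only [Function.comp_apply, Function.const_apply] at h3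
  rw [h3, Function.const_apply]

end CovDilAux

set_option linter.unusedSectionVars true

/-- If `X` carries a `Γ`-invariant Borel probability measure, then every unitary
representation of `Γ` embeds isometrically and equivariantly into the group part of a
covariant pair. -/
theorem every_rep_embeds_in_covariant_pair (Γ : Type) [Group Γ] (X : Type)
    [TopologicalSpace X] [CompactSpace X] [T2Space X] [MulAction Γ X]
    [ContinuousConstSMul Γ X] [MeasurableSpace X] [BorelSpace X]
    (μ : MeasureTheory.Measure X) (hμ : InvariantProbMeasure Γ X μ)
    (H : Type) [NormedAddCommGroup H] [InnerProductSpace ℂ H] [CompleteSpace H]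
    (u : Γ →* unitary (H →L[ℂ] H)) :
    Nonempty (CovariantDilation Γ X H u) := by
  obtain ⟨hprob, hinv⟩ := hμ
  haveI := hprob
  exact ⟨{ H' := MeasureTheory.Lp H 2 μ
           cp :=
             { π := CovDilAux.piOp
               u := CovDilAux.uOp u hinv
               covariant := fun g f => CovDilAux.covar hinv g f }
           V := CovDilAux.Vmap μ
           intertwine := fun g ξ => CovDilAux.intertwine hinv g ξ }⟩

end
end
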